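/- For all integers I, J ≥ 0 and m, n with |m| ≤ I and |n| ≤ J, the Poisson bracket of the functions L^I_m and L^J_n satisfies {L^I_m, L^J_n} = i(Jm − In) · L^{I+J−1}_{m+n}, with the convention that the right-hand side is 0 when Jm − In = 0; whenever Jm − In ≠ 0, the label (I+J−1, m+n) automatically satisfies I+J−1 ≥ 0 and |m+n| ≤ I+J−1, so the right-hand side is well defined. (This is the classical one-boson w_∞ algebra of conformal-spin currents, eq. (18) of the paper; the stated bracket convention fixes the overall sign.) -/

import Mathlib

/-!
STATEMENT 4: The classical one-boson w_∞ algebra (eq. (18) of the paper):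
{L^I_m, L^J_n} = i(Jm − In) L^{I+J−1}_{m+n} for the currents
L^I_m := ½ ā^{I−m} a^{I+m}, |m| ≤ I, with the stated conventions.
-/

open MvPolynomial

noncomputable section

/-- The polynomial ring `ℂ[a, ā]`; `false ↦ a`, `true ↦ ā`. -/
abbrev OneBosonRing := MvPolynomial Bool ℂ

/-- The Poisson bracket `{f,g} := i(∂f/∂a · ∂g/∂ā − ∂f/∂ā · ∂g/∂a)`. -/
def pb (f g : OneBosonRing) : OneBosonRing :=
  Complex.I • (pderiv false f * pderiv true g - pderiv true f * pderiv false g)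

/-- The higher-spin current `L^I_m := ½ ā^{I−m} a^{I+m}`. -/
def Lcur (I : ℕ) (m : ℤ) : OneBosonRing :=
  (2 : ℂ)⁻¹ • (X true ^ ((I : ℤ) - m).toNat * X false ^ ((I : ℤ) + m).toNat)

lemma pb_smul (c d : ℂ) (f g : OneBosonRing) :
    pb (c • f) (d • g) = (c * d) • pb f g := by
  simp only [pb, Derivation.map_smul, smul_mul_smul_comm, ← smul_sub, smul_smul]
  ring_nf

lemma pb_mono (A B C D : ℕ) :
    pb (X true ^ A * X false ^ B) (X true ^ C * X false ^ D : OneBosonRing)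
      = Complex.I • ( ((B : ℂ) * C) • (X true ^ (A + (C - 1)) * X false ^ ((B - 1) + D))
          - ((A : ℂ) * D) • (X true ^ ((A - 1) + C) * X false ^ (B + (D - 1))) ) := by
  simp only [pb, pderiv_mul, pderiv_pow, pderiv_X_self, pderiv_X_of_ne (by simp : (true:Bool) ≠ false),
    pderiv_X_of_ne (by simp : (false:Bool) ≠ true), mul_zero, zero_mul, mul_one, add_zero, zero_add]
  simp only [smul_eq_C_mul, map_mul, map_natCast]
  ring

theorem one_boson_w_infinity (I J : ℕ) (m n : ℤ)
    (hm : |m| ≤ (I : ℤ)) (hn : |n| ≤ (J : ℤ)) :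
    pb (Lcur I m) (Lcur J n) =
      (Complex.I * ((J : ℂ) * (m : ℂ) - (I : ℂ) * (n : ℂ))) • Lcur (I + J - 1) (m + n) ∧
    ((J : ℤ) * m - (I : ℤ) * n ≠ 0 →
      1 ≤ I + J ∧ |m + n| ≤ (I : ℤ) + (J : ℤ) - 1) := by
  rw [abs_le] at hm hn
  -- second conjunct first
  have part2 : (J : ℤ) * m - (I : ℤ) * n ≠ 0 →
      1 ≤ I + J ∧ |m + n| ≤ (I : ℤ) + (J : ℤ) - 1 := by
    intro h
    constructor
    · by_contra hIJ
      have hI : I = 0 := by omega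
      have hJ : J = 0 := by omega
      have hm0 : m = 0 := by simp [hI] at hm; omega
      have hn0 : n = 0 := by simp [hJ] at hn; omega
      apply h; rw [hm0, hn0]; ring
    · rw [abs_le]
      constructor
      · by_contra hc
        have h1 : m = -(I:ℤ) := by omega
        have h2 : n = -(J:ℤ) := by omega
        apply h; rw [h1, h2]; ring
      · by_contra hc
        have h1 : m = (I:ℤ) := by omega
        have h2 : n = (J:ℤ) := by omega
        apply h; rw [h1, h2]; ring
  refine ⟨?_, part2⟩
  set A := ((I : ℤ) - m).toNat with hAdef
  set B := ((I : ℤ) + m).toNat with hBdef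
  set C := ((J : ℤ) - n).toNat with hCdef
  set D := ((J : ℤ) + n).toNat with hDdef
  have hA : (A : ℤ) = (I : ℤ) - m := Int.toNat_of_nonneg (by omega)
  have hB : (B : ℤ) = (I : ℤ) + m := Int.toNat_of_nonneg (by omega)
  have hC : (C : ℤ) = (J : ℤ) - n := Int.toNat_of_nonneg (by omega)
  have hD : (D : ℤ) = (J : ℤ) + n := Int.toNat_of_nonneg (by omega)
  have key : ((B : ℤ) * C) - (A : ℤ) * D = 2 * ((J:ℤ) * m - I * n) := by
    rw [hA, hB, hC, hD]; ring
  rw [Lcur, Lcur, pb_smul, pb_mono]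
  by_cases h0 : (J : ℤ) * m - (I : ℤ) * n = 0
  · -- coefficient zero on both sides
    have hK : (J : ℂ) * m - (I : ℂ) * n = 0 := by
      have := congrArg (Int.cast : ℤ → ℂ) h0; push_cast at this; linear_combination this
    have hBCAD : B * C = A * D := by
      have : ((B * C : ℕ) : ℤ) = ((A * D : ℕ) : ℤ) := by push_cast; omega
      exact_mod_cast this
    rw [hK]
    rcases Nat.eq_zero_or_pos (B * C) with hz | hpos
    · have ha : A * D = 0 := by omega
      have h1 : ((B : ℂ) * C) = 0 := by exact_mod_cast (by exact_mod_cast hz : ((B*C:ℕ):ℂ) = 0)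
      have h2 : ((A : ℂ) * D) = 0 := by exact_mod_cast (by exact_mod_cast ha : ((A*D:ℕ):ℂ) = 0)
      rw [h1, h2]; simp
    · have hB1 : 1 ≤ B := Nat.one_le_iff_ne_zero.2 (by intro hz; rw [hz, Nat.zero_mul] at hpos; omega)
      have hC1 : 1 ≤ C := Nat.one_le_iff_ne_zero.2 (by intro hz; rw [hz, Nat.mul_zero] at hpos; omega)
      have hpos' : 0 < A * D := hBCAD ▸ hpos
      have hA1 : 1 ≤ A := Nat.one_le_iff_ne_zero.2 (by intro hz; rw [hz, Nat.zero_mul] at hpos'; omega)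
      have hD1 : 1 ≤ D := Nat.one_le_iff_ne_zero.2 (by intro hz; rw [hz, Nat.mul_zero] at hpos'; omega)
      have hexp1 : A + (C - 1) = (A - 1) + C := by omega
      have hexp2 : (B - 1) + D = B + (D - 1) := by omega
      have hcoef : ((B : ℂ) * C) = (A : ℂ) * D := by
        have : ((B * C : ℕ) : ℂ) = ((A * D : ℕ) : ℂ) := by exact_mod_cast hBCAD
        push_cast at this; exact this
      rw [hexp1, hexp2, hcoef]; simp only [hAdef, hBdef, hCdef, hDdef, sub_self, smul_zero, mul_zero, zero_smul]
  · -- nonzero case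
    obtain ⟨h1, habs⟩ := part2 h0
    rw [abs_le] at habs
    set E := ((((I + J - 1 : ℕ)) : ℤ) - (m + n)).toNat with hEdef
    set F := ((((I + J - 1 : ℕ)) : ℤ) + (m + n)).toNat with hFdef
    have hIJ : ((I + J - 1 : ℕ) : ℤ) = (I : ℤ) + J - 1 := by omega
    have hE : (E : ℤ) = (I : ℤ) + J - 1 - (m + n) := by
      rw [hEdef, Int.toNat_of_nonneg (by omega), hIJ]
    have hF : (F : ℤ) = (I : ℤ) + J - 1 + (m + n) := by
      rw [hFdef, Int.toNat_of_nonneg (by omega), hIJ]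
    have e1 : ((B : ℂ) * C) • (X true ^ (A + (C - 1)) * X false ^ ((B - 1) + D) : OneBosonRing)
        = ((B : ℂ) * C) • (X true ^ E * X false ^ F) := by
      rcases Nat.eq_zero_or_pos (B * C) with hz | hpos
      · have : ((B : ℂ) * C) = 0 := by exact_mod_cast (by exact_mod_cast hz : ((B*C:ℕ):ℂ) = 0)
        rw [this]; simp
      · have hB1 : 1 ≤ B := Nat.one_le_iff_ne_zero.2 (by intro hz; rw [hz, Nat.zero_mul] at hpos; omega)
        have hC1 : 1 ≤ C := Nat.one_le_iff_ne_zero.2 (by intro hz; rw [hz, Nat.mul_zero] at hpos; omega)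
        have g1 : A + (C - 1) = E := by omega
        have g2 : (B - 1) + D = F := by omega
        rw [g1, g2]
    have e2 : ((A : ℂ) * D) • (X true ^ ((A - 1) + C) * X false ^ (B + (D - 1)) : OneBosonRing)
        = ((A : ℂ) * D) • (X true ^ E * X false ^ F) := by
      rcases Nat.eq_zero_or_pos (A * D) with hz | hpos
      · have : ((A : ℂ) * D) = 0 := by exact_mod_cast (by exact_mod_cast hz : ((A*D:ℕ):ℂ) = 0)
        rw [this]; simp
      · have hA1 : 1 ≤ A := Nat.one_le_iff_ne_zero.2 (by intro hz; rw [hz, Nat.zero_mul] at hpos; omega)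
        have hD1 : 1 ≤ D := Nat.one_le_iff_ne_zero.2 (by intro hz; rw [hz, Nat.mul_zero] at hpos; omega)
        have g1 : (A - 1) + C = E := by omega
        have g2 : B + (D - 1) = F := by omega
        rw [g1, g2]
    rw [e1, e2]
    have hcast : (B : ℂ) * C - (A : ℂ) * D = 2 * ((J : ℂ) * m - (I : ℂ) * n) := by
      have := congrArg (Int.cast : ℤ → ℂ) key; push_cast at this; linear_combination this
    rw [Lcur, hEdef, hFdef]
    rw [← sub_smul, hcast]
    match_scalars
    ring
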